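/- Let n be a positive integer, κ an integer, and let C be an n×n J₂-free (0,1)-matrix all of whose row sums and column sums equal κ. Then Θ_κ(C) is a symmetric (0,1)-matrix with all diagonal entries 0 and all row and column sums equal to n − κ² + κ − 1; moreover, for all indices i ≠ j, the (i,j)-entry of Θ_κ(C) equals 1 if and only if there is no index k with C_{ik} = C_{jk} = 1. -/
import Mathlib

open Matrix BigOperators

/-- The Hoffman–Singleton operator `Θ_κ(A) = (κ-1)·I_n + J_n - A·Aᵀ`. -/
def Theta (n : ℕ) (κ : ℤ) (A : Matrix (Fin n) (Fin n) ℤ) : Matrix (Fin n) (Fin n) ℤ :=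
  (κ - 1) • (1 : Matrix (Fin n) (Fin n) ℤ) + Matrix.of (fun _ _ => (1 : ℤ)) - A * Aᵀ

/-- A matrix is `J₂`-free if it has no all-one `2×2` submatrix. -/
def J2Free {n : ℕ} (M : Matrix (Fin n) (Fin n) ℤ) : Prop :=
  ¬ ∃ i l j k : Fin n, i ≠ l ∧ j ≠ k ∧ M i j = 1 ∧ M i k = 1 ∧ M l j = 1 ∧ M l k = 1

lemma theta_apply (n : ℕ) (κ : ℤ) (C : Matrix (Fin n) (Fin n) ℤ) (i j : Fin n) :
    Theta n κ C i j = (κ - 1) * (if i = j then 1 else 0) + 1 - ∑ k, C i k * C j k := by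
  simp only [Theta, Matrix.sub_apply, Matrix.add_apply, Matrix.smul_apply, Matrix.of_apply,
    Matrix.mul_apply, Matrix.transpose_apply, Matrix.one_apply, smul_eq_mul]

lemma dot_eq_card (n : ℕ) (C : Matrix (Fin n) (Fin n) ℤ)
    (h01 : ∀ i j, C i j = 0 ∨ C i j = 1) (i j : Fin n) :
    ∑ k, C i k * C j k =
      ((Finset.univ.filter (fun k => C i k = 1 ∧ C j k = 1)).card : ℤ) := by
  rw [Finset.card_filter]
  push_cast
  refine Finset.sum_congr rfl fun k _ => ?_
  rcases h01 i k with h1 | h1 <;> rcases h01 j k with h2 | h2 <;>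
    simp [h1, h2]

lemma card_le_one (n : ℕ) (C : Matrix (Fin n) (Fin n) ℤ) (hJ2 : J2Free C)
    (i j : Fin n) (hij : i ≠ j) :
    (Finset.univ.filter (fun k => C i k = 1 ∧ C j k = 1)).card ≤ 1 := by
  rw [Finset.card_le_one]
  intro a ha b hb
  simp only [Finset.mem_filter] at ha hb
  by_contra hab
  exact hJ2 ⟨i, j, a, b, hij, hab, ha.2.1, hb.2.1, ha.2.2, hb.2.2⟩

theorem stmt_8 (n : ℕ) (hn : 0 < n) (κ : ℤ) (C : Matrix (Fin n) (Fin n) ℤ)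
    (h01 : ∀ i j, C i j = 0 ∨ C i j = 1) (hJ2 : J2Free C)
    (hrow : ∀ i, ∑ j, C i j = κ) (hcol : ∀ j, ∑ i, C i j = κ) :
    (Theta n κ C).IsSymm ∧
    (∀ i j, Theta n κ C i j = 0 ∨ Theta n κ C i j = 1) ∧
    (∀ i, Theta n κ C i i = 0) ∧
    (∀ i, ∑ j, Theta n κ C i j = (n : ℤ) - κ ^ 2 + κ - 1) ∧
    (∀ j, ∑ i, Theta n κ C i j = (n : ℤ) - κ ^ 2 + κ - 1) ∧
    (∀ i j, i ≠ j → (Theta n κ C i j = 1 ↔ ¬ ∃ k, C i k = 1 ∧ C j k = 1)) := by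
  have hdiag : ∀ i, Theta n κ C i i = 0 := by
    intro i
    rw [theta_apply]
    have : ∑ k, C i k * C i k = ∑ k, C i k := by
      refine Finset.sum_congr rfl fun k _ => ?_
      rcases h01 i k with h | h <;> simp [h]
    rw [this, hrow i]
    simp
  have hoff : ∀ i j, i ≠ j → Theta n κ C i j =
      1 - ((Finset.univ.filter (fun k => C i k = 1 ∧ C j k = 1)).card : ℤ) := by
    intro i j hij
    rw [theta_apply, dot_eq_card n C h01, if_neg hij]
    ring
  have hsym : (Theta n κ C).IsSymm := by
    rw [Matrix.IsSymm]
    ext i j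
    rw [Matrix.transpose_apply, theta_apply, theta_apply]
    congr 1
    · congr 1
      simp [eq_comm]
    · exact Finset.sum_congr rfl fun k _ => mul_comm _ _
  have hrowsum : ∀ i, ∑ j, Theta n κ C i j = (n : ℤ) - κ ^ 2 + κ - 1 := by
    intro i
    simp only [theta_apply]
    rw [Finset.sum_sub_distrib, Finset.sum_add_distrib]
    have h1 : ∑ j : Fin n, (κ - 1) * (if i = j then (1:ℤ) else 0) = κ - 1 := by
      simp
    have h2 : ∑ j : Fin n, (1 : ℤ) = n := by simp
    have h3 : ∑ j : Fin n, ∑ k, C i k * C j k = κ ^ 2 := by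
      rw [Finset.sum_comm]
      have : ∀ k, ∑ j : Fin n, C i k * C j k = C i k * κ := by
        intro k
        rw [← Finset.mul_sum, hcol k]
      simp only [this]
      rw [← Finset.sum_mul, hrow i]
      ring
    rw [h1, h2, h3]
    ring
  refine ⟨hsym, ?_, hdiag, hrowsum, ?_, ?_⟩
  · intro i j
    rcases eq_or_ne i j with rfl | hij
    · exact Or.inl (hdiag i)
    · rw [hoff i j hij]
      have := card_le_one n C hJ2 i j hij
      omega
  · intro j
    have : ∀ i, Theta n κ C i j = Theta n κ C j i := fun i => hsym.apply j i
    simp only [this]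
    exact hrowsum j
  · intro i j hij
    rw [hoff i j hij]
    constructor
    · intro h hex
      obtain ⟨k, hk⟩ := hex
      have hk' : k ∈ Finset.univ.filter (fun k => C i k = 1 ∧ C j k = 1) := by
        simp [hk.1, hk.2]
      have : (1:ℤ) ≤ ((Finset.univ.filter (fun k => C i k = 1 ∧ C j k = 1)).card : ℤ) := by
        exact_mod_cast Finset.card_pos.mpr ⟨k, hk'⟩
      omega
    · intro h
      have : Finset.univ.filter (fun k => C i k = 1 ∧ C j k = 1) = ∅ := by
        rw [Finset.filter_eq_empty_iff]
        intro k _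
        intro hk
        exact h ⟨k, hk⟩
      rw [this]
      simp
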